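/- Let k ≥ 1, 0 ≤ s < k, and let σ be the permutation of {1, …, 3^k − 1} given by σ(i) = 2i mod 3^k. Then the cycle (orbit) of σ containing 3^s has length exactly 2·3^(k−1−s). -/

import Mathlib

lemma lemA (t : ℕ) : 3 ∣ 2 ^ t - 1 ↔ 2 ∣ t := by
  have h1 : 1 ≤ 2 ^ t := Nat.one_le_two_pow
  rw [← Nat.modEq_iff_dvd' h1]
  constructor
  · intro h
    rcases Nat.even_or_odd t with he | ho
    · exact he.two_dvd
    exfalso
    obtain ⟨u, rfl⟩ := ho
    have h2 : (2:ℕ) ^ (2*u+1) % 3 = 2 := by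
      rw [pow_succ, pow_mul, Nat.mul_mod, Nat.pow_mod]
      norm_num
    have h3 := h.symm
    unfold Nat.ModEq at h3
    rw [h2] at h3
    norm_num at h3
  · rintro ⟨u, rfl⟩
    symm
    unfold Nat.ModEq
    rw [pow_mul, Nat.pow_mod]
    norm_num

lemma lemB (m u : ℕ) (hm : 1 ≤ m) : 3 ^ m ∣ 4 ^ u - 1 ↔ 3 ^ (m - 1) ∣ u := by
  rcases Nat.eq_zero_or_pos u with rfl | hu
  · simp
  · have h3 : Nat.Prime 3 := by norm_num
    have hlte := Nat.emultiplicity_pow_sub_pow h3 (by decide) (x := 4) (y := 1)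
      (by norm_num) (by norm_num) u
    simp only [one_pow] at hlte
    have h31 : emultiplicity 3 ((4:ℕ) - 1) = 1 := by
      have := emultiplicity_pow_self_of_prime h3.prime 1
      simpa using this
    obtain ⟨n, rfl⟩ : ∃ n, m = n + 1 := ⟨m - 1, by omega⟩
    rw [pow_dvd_iff_le_emultiplicity, pow_dvd_iff_le_emultiplicity, hlte, h31]
    simp only [Nat.add_sub_cancel, Nat.cast_add, Nat.cast_one]
    rw [add_comm (1 : ℕ∞)]
    exact WithTop.add_le_add_iff_right ENat.one_ne_top

lemma key (m t : ℕ) (hm : 1 ≤ m) : 3 ^ m ∣ 2 ^ t - 1 ↔ 2 * 3 ^ (m - 1) ∣ t := by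
  rcases Nat.even_or_odd t with he | ho
  · obtain ⟨u, rfl⟩ := he
    have h4 : (2:ℕ) ^ (u + u) = 4 ^ u := by
      rw [← two_mul, pow_mul]; norm_num
    rw [h4, lemB m u hm]
    constructor
    · rintro ⟨c, rfl⟩; exact ⟨c, by ring⟩
    · rintro ⟨c, hc⟩
      rw [mul_assoc] at hc
      exact ⟨c, by omega⟩
  · constructor
    · intro h
      have h2 := (lemA t).mp (dvd_trans (dvd_pow_self 3 (by omega)) h)
      obtain ⟨v, hv⟩ := ho
      omega
    · rintro ⟨c, hc⟩
      exfalso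
      rw [mul_assoc] at hc
      obtain ⟨v, hv⟩ := ho
      omega

/-- For k ≥ 1, 0 ≤ s < k, and σ(i) = 2i mod 3^k on {1,…,3^k−1}, the cycle of σ
containing 3^s has length exactly 2·3^(k−1−s): that value is the least positive
t with σ^t(3^s) = 3^s. -/
theorem cycle_length_of_three_pow (k s : ℕ) (hk : 1 ≤ k) (hs : s < k) :
    IsLeast {t : ℕ | 0 < t ∧ 2 ^ t * 3 ^ s % 3 ^ k = 3 ^ s} (2 * 3 ^ (k - 1 - s)) := by
  have hm : 1 ≤ k - s := by omega
  have hms : k - s - 1 = k - 1 - s := by omega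
  have hslt : (3:ℕ) ^ s < 3 ^ k := Nat.pow_lt_pow_right (by norm_num) hs
  have hpos : 0 < (3:ℕ) ^ s := Nat.pow_pos (by norm_num)
  have hiff : ∀ t : ℕ, (2 ^ t * 3 ^ s % 3 ^ k = 3 ^ s) ↔ 2 * 3 ^ (k - 1 - s) ∣ t := by
    intro t
    have hle : 3 ^ s ≤ 2 ^ t * 3 ^ s := Nat.le_mul_of_pos_left _ (Nat.pow_pos (by norm_num))
    have e1 : 2 ^ t * 3 ^ s % 3 ^ k = 3 ^ s ↔ (3:ℕ)^s ≡ 2 ^ t * 3 ^ s [MOD 3 ^ k] := by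
      unfold Nat.ModEq
      rw [Nat.mod_eq_of_lt hslt]
      exact comm
    rw [e1, Nat.modEq_iff_dvd' hle]
    have e2 : 2 ^ t * 3 ^ s - 3 ^ s = 3 ^ s * (2 ^ t - 1) := by
      rw [Nat.mul_sub, mul_comm, mul_one]
    rw [e2]
    have e3 : (3:ℕ) ^ k = 3 ^ s * 3 ^ (k - s) := by
      rw [← pow_add]; congr 1; omega
    rw [e3, Nat.mul_dvd_mul_iff_left hpos, key (k - s) t hm, hms]
  constructor
  · refine ⟨by positivity, (hiff _).mpr dvd_rfl⟩
  · rintro t ⟨ht0, ht⟩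
    exact Nat.le_of_dvd ht0 ((hiff t).mp ht)
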